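/- Let C be a Krull-Schmidt category and f a morphism in C. Then f lies in the transfinite radical rad_C* if and only if there exists a collection of morphisms f_{pr}: X_r → X_p in rad_C, one for each pair of rational numbers 0 ≤ p < r ≤ 1, such that f_{ps} = f_{pr} ∘ f_{rs} whenever p < r < s and f_{01} = f. -/

import Mathlib

open CategoryTheory CategoryTheory.Limits

universe w v u

structure CatIdeal (C : Type u) [Category.{v} C] [Preadditive C] where
  mem : ∀ {X Y : C}, (X ⟶ Y) → Prop
  zero_mem : ∀ {X Y : C}, mem (0 : X ⟶ Y)
  add_mem : ∀ {X Y : C} {f g : X ⟶ Y}, mem f → mem g → mem (f + g)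
  comp_mem_left : ∀ {X Y Z : C} {f : X ⟶ Y} (g : Y ⟶ Z), mem f → mem (f ≫ g)
  comp_mem_right : ∀ {X Y Z : C} (f : X ⟶ Y) {g : Y ⟶ Z}, mem g → mem (f ≫ g)

namespace CatIdeal

variable {C : Type u} [Category.{v} C] [Preadditive C]

instance : LE (CatIdeal C) :=
  ⟨fun I J => ∀ {X Y : C} {f : X ⟶ Y}, I.mem f → J.mem f⟩

/-- The ideal of all morphisms. -/
def top (C : Type u) [Category.{v} C] [Preadditive C] : CatIdeal C where
  mem _ := True
  zero_mem := trivial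
  add_mem := by intros; trivial
  comp_mem_left := by intros; trivial
  comp_mem_right := by intros; trivial

/-- The ideal generated by a class of morphisms. -/
def span (S : ∀ {X Y : C}, (X ⟶ Y) → Prop) : CatIdeal C where
  mem f := ∀ J : CatIdeal C, (∀ {A B : C} {g : A ⟶ B}, S g → J.mem g) → J.mem f
  zero_mem := fun J _ => J.zero_mem
  add_mem := by intro X Y f g hf hg J hS; exact J.add_mem (hf J hS) (hg J hS)
  comp_mem_left := by intro X Y Z f g hf J hS; exact J.comp_mem_left g (hf J hS)
  comp_mem_right := by intro X Y Z f g hg J hS; exact J.comp_mem_right f (hg J hS)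

/-- The product of two ideals: the ideal generated by all composites `g ≫ h`
with `g ∈ I` and `h ∈ J`. -/
def mul (I J : CatIdeal C) : CatIdeal C :=
  span (fun {X Z} f => ∃ (Y : C) (g : X ⟶ Y) (h : Y ⟶ Z), I.mem g ∧ J.mem h ∧ f = g ≫ h)

/-- An ideal is idempotent if it equals its square. -/
def IsIdempotent (I : CatIdeal C) : Prop := I = I.mul I

/-- The intersection of a family of ideals. -/
def iInter {ι : Sort*} (F : ι → CatIdeal C) : CatIdeal C where
  mem f := ∀ i, (F i).mem f
  zero_mem := fun i => (F i).zero_mem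
  add_mem := by intro X Y f g hf hg i; exact (F i).add_mem (hf i) (hg i)
  comp_mem_left := by intro X Y Z f g hf i; exact (F i).comp_mem_left g (hf i)
  comp_mem_right := by intro X Y Z f g hg i; exact (F i).comp_mem_right f (hg i)

/-- Finite powers of an ideal: `npow I n` is the ideal generated by `n`-fold
composites of morphisms from `I` (with `npow I 0` the ideal of all morphisms). -/
def npow (I : CatIdeal C) : ℕ → CatIdeal C
  | 0 => top C
  | n + 1 => (npow I n).mul I

/-- The largest limit-or-zero ordinal `≤ α`, namely `ω * (α / ω)`. -/
noncomputable def limitPart (α : Ordinal.{w}) : Ordinal.{w} :=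
  Ordinal.omega0 * (α / Ordinal.omega0)

theorem limitPart_lt {α : Ordinal.{w}} (h0 : α ≠ 0) (hl : ¬ Order.IsSuccLimit α) :
    limitPart α < α := by
  have hle : limitPart α ≤ α := Ordinal.mul_div_le α Ordinal.omega0
  rcases lt_or_eq_of_le hle with h | h
  · exact h
  · exfalso
    rcases eq_or_ne (α / Ordinal.omega0) 0 with hq | hq
    · exact h0 (by rw [← h]; simp [limitPart, hq])
    · exact hl (by rw [← h]; exact Ordinal.isSuccLimit_mul_left Ordinal.isSuccLimit_omega0 (pos_iff_ne_zero.2 hq))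

end CatIdeal

open Ordinal Classical in
/-- Transfinite powers of an ideal `I`: `tpow I 0` is the ideal of all morphisms,
`tpow I n` (for finite `n ≥ 1`) is the ideal generated by `n`-fold composites of
morphisms from `I`, `tpow I α = ⋂_{β < α} tpow I β` at limit ordinals `α`, and
`tpow I (β + n) = (tpow I β) ^ (n + 1)` for `β` limit and `1 ≤ n < ω`. -/
noncomputable def CatIdeal.tpow {C : Type u} [Category.{v} C] [Preadditive C]
    (I : CatIdeal C) : Ordinal.{w} → CatIdeal C
  | α =>
    if h0 : α = 0 then CatIdeal.top C
    else if hl : Order.IsSuccLimit α then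
      CatIdeal.iInter (fun β : {β : Ordinal.{w} // β < α} =>
        have := β.2
        CatIdeal.tpow I β.1)
    else
      (have : Ordinal.pred α < α :=
        Ordinal.pred_lt_iff_not_isSuccPrelimit.2 (fun hp => hl (Ordinal.isSuccLimit_iff.2 ⟨h0, hp⟩))
       CatIdeal.tpow I (Ordinal.pred α)).mul
        (if Ordinal.omega0 ≤ α then
          have := CatIdeal.limitPart_lt h0 hl
          CatIdeal.tpow I (CatIdeal.limitPart α)
         else I)
  termination_by α => α

namespace CatIdeal

/-- The intersection `I* = ⋂_α I^α` of all transfinite powers of `I`. -/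
noncomputable def tstar {C : Type u} [Category.{v} C] [Preadditive C] (I : CatIdeal C) : CatIdeal C :=
  iInter (fun α : Ordinal.{v} => tpow I α)

end CatIdeal

section KS

open CategoryTheory CategoryTheory.Limits

variable (C : Type u) [Category.{v} C] [Preadditive C]

/-- `X` is a biproduct (finite direct sum) of the finite family `Y`,
witnessed by projections and inclusions. -/
def IsBiproductOf (X : C) {n : ℕ} (Y : Fin n → C) : Prop :=
  ∃ (p : ∀ i, X ⟶ Y i) (s : ∀ i, Y i ⟶ X),
    (∀ i, s i ≫ p i = 𝟙 (Y i)) ∧ (∀ i j, i ≠ j → s i ≫ p j = 0) ∧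
    (∑ i, p i ≫ s i) = 𝟙 X

/-- An object is indecomposable if it is nonzero and has no idempotent endomorphisms
other than `0` and the identity (i.e. it admits no nontrivial direct sum decomposition). -/
def IsIndecomposableObj (X : C) : Prop :=
  ¬ IsZero X ∧ ∀ e : X ⟶ X, e ≫ e = e → e = 0 ∨ e = 𝟙 X

/-- The radical of a Krull-Schmidt category: the ideal generated by all non-invertible
morphisms between indecomposable objects. -/
def catRadical : CatIdeal C :=
  CatIdeal.span (fun {X Y} f => IsIndecomposableObj C X ∧ IsIndecomposableObj C Y ∧ ¬ IsIso f)

/-- The transfinite radical `rad_C* = ⋂_α rad_C^α`. -/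
noncomputable def catTransRadical : CatIdeal C := CatIdeal.tstar (catRadical C)

/-- A Krull-Schmidt category: every object decomposes as a finite direct sum of objects
with local endomorphism rings. -/
def IsKrullSchmidt : Prop :=
  ∀ X : C, ∃ (n : ℕ) (Y : Fin n → C),
    (∀ i, IsLocalRing (End (Y i))) ∧ IsBiproductOf C X Y

/-- Local descending chain condition on ideals: every descending chain of ideals,
evaluated at any fixed pair of objects, stabilizes. -/
def HasLocalDCC : Prop :=
  ∀ (I : ℕ → CatIdeal C), (∀ n, I (n + 1) ≤ I n) →
    ∀ X Y : C, ∃ n, ∀ m, n ≤ m → ∀ f : X ⟶ Y, (I m).mem f ↔ (I n).mem f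

/-- The ideal generated by the identity morphisms of the objects in `S`. -/
def identityIdeal (S : Set C) : CatIdeal C :=
  CatIdeal.span (fun {X Y} f => ∃ h : X = Y, X ∈ S ∧ f = CategoryTheory.eqToHom h)

/-- An ideal is zero if it consists exactly of the zero morphisms. -/
def CatIdeal.IsZeroIdeal {C : Type u} [Category.{v} C] [Preadditive C] (I : CatIdeal C) : Prop :=
  ∀ {X Y : C} {f : X ⟶ Y}, I.mem f → f = 0

end KS

section Part1

open CategoryTheory

namespace CatIdeal

variable {C : Type u} [Category.{v} C] [Preadditive C]

lemma span_mem_gen {S : ∀ {X Y : C}, (X ⟶ Y) → Prop} {X Y : C} {f : X ⟶ Y}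
    (h : S f) : (span S).mem f := fun _ hS => hS h

lemma span_le {S : ∀ {X Y : C}, (X ⟶ Y) → Prop} {J : CatIdeal C}
    (h : ∀ {A B : C} {g : A ⟶ B}, S g → J.mem g) : span S ≤ J :=
  fun hf => hf J h

lemma mul_mem_of {I J : CatIdeal C} {X Y Z : C} {g : X ⟶ Y} {h : Y ⟶ Z}
    (hg : I.mem g) (hh : J.mem h) : (mul I J).mem (g ≫ h) :=
  span_mem_gen ⟨_, g, h, hg, hh, rfl⟩

lemma mul_le_left {I J : CatIdeal C} : mul I J ≤ I := by
  refine span_le ?_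
  rintro A B g ⟨M, u, v, hu, hv, rfl⟩
  exact I.comp_mem_left v hu

lemma mul_le_right {I J : CatIdeal C} : mul I J ≤ J := by
  refine span_le ?_
  rintro A B g ⟨M, u, v, hu, hv, rfl⟩
  exact J.comp_mem_right u hv

lemma mul_mono {I I' J J' : CatIdeal C} (hI : I ≤ I') (hJ : J ≤ J') :
    mul I J ≤ mul I' J' := by
  refine span_le ?_
  rintro A B g ⟨M, u, v, hu, hv, rfl⟩
  exact mul_mem_of (hI hu) (hJ hv)

lemma mem_mul_iff [Limits.HasFiniteBiproducts C] {I J : CatIdeal C} {X Z : C} {f : X ⟶ Z} :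
    (mul I J).mem f ↔ ∃ (Y : C) (g : X ⟶ Y) (h : Y ⟶ Z), I.mem g ∧ J.mem h ∧ f = g ≫ h := by
  haveI : Limits.HasBinaryBiproducts C := Limits.hasBinaryBiproducts_of_finite_biproducts C
  constructor
  · intro hf
    let K : CatIdeal C :=
      { mem := fun {X Z} f =>
          ∃ (Y : C) (g : X ⟶ Y) (h : Y ⟶ Z), I.mem g ∧ J.mem h ∧ f = g ≫ h
        zero_mem := fun {X Z} => ⟨X, 0, 0, I.zero_mem, J.zero_mem, by simp⟩
        add_mem := by
          rintro X Z f₁ f₂ ⟨Y₁, g₁, h₁, hg₁, hh₁, rfl⟩ ⟨Y₂, g₂, h₂, hg₂, hh₂, rfl⟩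
          refine ⟨Y₁ ⊞ Y₂, Limits.biprod.lift g₁ g₂, Limits.biprod.desc h₁ h₂, ?_, ?_, by simp⟩
          · have : Limits.biprod.lift g₁ g₂ =
                g₁ ≫ Limits.biprod.inl + g₂ ≫ Limits.biprod.inr := by
              apply Limits.biprod.hom_ext <;> simp
            rw [this]
            exact I.add_mem (I.comp_mem_left _ hg₁) (I.comp_mem_left _ hg₂)
          · have : Limits.biprod.desc h₁ h₂ =
                Limits.biprod.fst ≫ h₁ + Limits.biprod.snd ≫ h₂ := by
              apply Limits.biprod.hom_ext' <;> simp
            rw [this]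
            exact J.add_mem (J.comp_mem_right _ hh₁) (J.comp_mem_right _ hh₂)
        comp_mem_left := by
          rintro X Z W f u ⟨Y, g, h, hg, hh, rfl⟩
          exact ⟨Y, g, h ≫ u, hg, J.comp_mem_left _ hh, by simp⟩
        comp_mem_right := by
          rintro X Z W f u ⟨Y, g, h, hg, hh, rfl⟩
          exact ⟨Y, f ≫ g, h, I.comp_mem_right _ hg, hh, by simp⟩ }
    exact span_le (J := K) (fun hS => hS) hf
  · rintro ⟨Y, g, h, hg, hh, rfl⟩
    exact mul_mem_of hg hh

end CatIdeal

end Part1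
section Part2

open CategoryTheory Ordinal

namespace CatIdeal

variable {C : Type u} [Category.{v} C] [Preadditive C]

lemma tpow_zero (I : CatIdeal C) : tpow I (0 : Ordinal.{w}) = CatIdeal.top C := by
  rw [tpow]; simp

lemma tpow_limit (I : CatIdeal C) {α : Ordinal.{w}} (hl : Order.IsSuccLimit α) :
    tpow I α =
      CatIdeal.iInter (fun β : {β : Ordinal.{w} // β < α} => CatIdeal.tpow I β.1) := by
  rw [tpow]; rw [dif_neg hl.pos.ne', dif_pos hl]

open Classical in
lemma tpow_succ (I : CatIdeal C) {α : Ordinal.{w}} (h0 : α ≠ 0) (hl : ¬ Order.IsSuccLimit α) :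
    tpow I α =
      (tpow I (Ordinal.pred α)).mul
        (if Ordinal.omega0 ≤ α then tpow I (CatIdeal.limitPart α) else I) := by
  rw [tpow]; rw [dif_neg h0, dif_neg hl]

lemma tpow_antitone (I : CatIdeal C) :
    ∀ α β : Ordinal.{w}, β ≤ α → tpow I α ≤ tpow I β := by
  intro α
  induction α using Ordinal.induction with
  | h α IH =>
    intro β hβ
    rcases eq_or_lt_of_le hβ with rfl | hβ
    · exact fun h => h
    rcases eq_or_ne α 0 with rfl | h0
    · exact absurd hβ ((zero_le : (0 : Ordinal.{w}) ≤ β).not_gt)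
    by_cases hl : Order.IsSuccLimit α
    · rw [tpow_limit I hl]
      intro hf
      exact hf ⟨β, hβ⟩
    · rw [tpow_succ I h0 hl]
      have hpred : Ordinal.pred α < α := Ordinal.pred_lt_iff_not_isSuccPrelimit.2 (fun hp => hl (Ordinal.isSuccLimit_iff.2 ⟨h0, hp⟩))
      have hβp : β ≤ Ordinal.pred α := by
        obtain ⟨γ, rfl⟩ := (Ordinal.zero_or_succ_or_isSuccLimit α).resolve_left h0 |>.resolve_right hl
        rw [Ordinal.pred_succ]
        exact Order.lt_succ_iff.1 hβ
      intro hf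
      exact IH _ hpred _ hβp (mul_le_left hf)

lemma tstar_le_tpow (I : CatIdeal C) (α : Ordinal.{v}) : tstar I ≤ tpow I α :=
  fun h => h α

lemma tstar_le_self (I : CatIdeal C) : tstar I ≤ I := by
  intro X Y f hf
  have h1 : tpow I (1 : Ordinal.{v}) ≤ I := by
    rw [tpow_succ I one_ne_zero (by simpa using Order.not_isSuccLimit_succ (0 : Ordinal.{v}))]
    rw [if_neg (by simpa using Ordinal.one_lt_omega0.not_ge)]
    exact mul_le_right
  exact h1 (hf 1)

end CatIdeal

end Part2
section Part3

open CategoryTheory Ordinal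

namespace CatIdeal

variable {C : Type u} [Category.{v} C] [Preadditive C]

lemma exists_bound [EssentiallySmall.{v} C] (I : CatIdeal C) :
    ∃ α₀ : Ordinal.{v}, ∀ γ : Ordinal.{v}, α₀ ≤ γ →
      ∀ {X Y : C} (u : X ⟶ Y), ((tpow I γ).mem u ↔ (tpow I α₀).mem u) := by
  classical
  let e := equivSmallModel C
  let D := Σ (X : SmallModel C) (Y : SmallModel C), X ⟶ Y
  let F : Ordinal.{v} → Set D := fun γ => {d | (tpow I γ).mem (e.inverse.map d.2.2)}
  have hFanti : ∀ γ δ : Ordinal.{v}, γ ≤ δ → F δ ⊆ F γ := fun γ δ h d hd =>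
    tpow_antitone I δ γ h hd
  have key : ∀ {X Y : C} (u : X ⟶ Y),
      e.inverse.map (e.functor.map u) = e.unitInv.app X ≫ u ≫ e.unit.app Y := by
    intro X Y u
    have h := e.unit.naturality u
    simp only [Functor.id_map, Functor.comp_map] at h
    calc e.inverse.map (e.functor.map u)
        = (e.unitInv.app X ≫ e.unit.app X) ≫ e.inverse.map (e.functor.map u) := by simp
      _ = e.unitInv.app X ≫ (u ≫ e.unit.app Y) := by rw [Category.assoc, ← h]
  have hmem : ∀ (γ : Ordinal.{v}) {X Y : C} (u : X ⟶ Y),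
      ((tpow I γ).mem u ↔ (⟨e.functor.obj X, e.functor.obj Y, e.functor.map u⟩ : D) ∈ F γ) := by
    intro γ X Y u
    show (tpow I γ).mem u ↔ (tpow I γ).mem (e.inverse.map (e.functor.map u))
    constructor
    · intro h
      rw [key]
      exact (tpow I γ).comp_mem_right _ ((tpow I γ).comp_mem_left _ h)
    · intro h
      have hu : u = e.unit.app X ≫ e.inverse.map (e.functor.map u) ≫ e.unitInv.app Y := by
        rw [key]; simp
      rw [hu]
      exact (tpow I γ).comp_mem_right _ ((tpow I γ).comp_mem_left _ h)
  have hsec : ∀ x : Set.range F, ∃ γ, F γ = (x : Set D) := fun x => x.2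
  choose sec hsec2 using hsec
  haveI : Small.{v} (Set.range sec) := small_range _
  obtain ⟨α₀, hα₀⟩ := Ordinal.bddAbove_of_small (s := Set.range sec)
  refine ⟨α₀, ?_⟩
  intro γ hγ X Y u
  have h1 : sec ⟨F γ, ⟨γ, rfl⟩⟩ ≤ α₀ := hα₀ (Set.mem_range_self _)
  have h2 : F (sec ⟨F γ, ⟨γ, rfl⟩⟩) = F γ := hsec2 _
  have hFeq : F γ = F α₀ := by
    apply subset_antisymm
    · exact hFanti α₀ γ hγ
    · intro d hd
      rw [← h2]
      exact hFanti _ α₀ h1 hd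
  rw [hmem γ u, hmem α₀ u, hFeq]

lemma tstar_mem_mul_self [EssentiallySmall.{v} C] {I : CatIdeal C} {X Y : C} {u : X ⟶ Y}
    (h : (tstar I).mem u) : ((tstar I).mul (tstar I)).mem u := by
  obtain ⟨α₀, hα₀⟩ := exists_bound I
  have hiff : ∀ {X Y : C} (v : X ⟶ Y), ((tstar I).mem v ↔ (tpow I α₀).mem v) := by
    intro X Y v
    constructor
    · exact fun hv => hv α₀
    · intro hv γ
      rcases le_or_gt α₀ γ with h' | h'
      · exact (hα₀ γ h' v).2 hv
      · exact tpow_antitone I α₀ γ h'.le hv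
  set lam := α₀ + Ordinal.omega0 with hlam
  have hlimit : Order.IsSuccLimit lam := Ordinal.isSuccLimit_add α₀ Ordinal.isSuccLimit_omega0
  have hωlam : Ordinal.omega0 ≤ lam := le_add_self
  have hα₀lam : α₀ ≤ lam := le_self_add
  have h0 : (lam + 1 : Ordinal.{v}) ≠ 0 := by
    rw [Ordinal.add_one_eq_succ]; exact (Order.succ_ne_bot lam : _)
  have hnl : ¬ Order.IsSuccLimit (lam + 1 : Ordinal.{v}) := by
    rw [Ordinal.add_one_eq_succ]; exact Order.not_isSuccLimit_succ _
  have hpred : Ordinal.pred (lam + 1) = lam := by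
    rw [Ordinal.add_one_eq_succ, Ordinal.pred_succ]
  have hlp : limitPart (lam + 1) = lam := by
    obtain ⟨c, hc⟩ := (Ordinal.isSuccLimit_iff_omega0_dvd.1 hlimit).2
    show Ordinal.omega0 * ((lam + 1) / Ordinal.omega0) = lam
    rw [hc, Ordinal.mul_add_div c Ordinal.omega0_ne_zero 1,
      Ordinal.div_eq_zero_of_lt Ordinal.one_lt_omega0, add_zero]
  have hsq : tpow I (lam + 1) = (tpow I lam).mul (tpow I lam) := by
    rw [tpow_succ I h0 hnl, hpred, if_pos (hωlam.trans (le_self_add)), hlp]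
  have hu : (tpow I (lam + 1)).mem u := h _
  rw [hsq] at hu
  have hle : tpow I lam ≤ tstar I := fun {X Y} {v} hv => (hiff v).2 ((hα₀ lam hα₀lam v).1 hv)
  exact mul_mono hle hle hu

lemma tstar_split [EssentiallySmall.{v} C] [Limits.HasFiniteBiproducts C] {I : CatIdeal C}
    {X Y : C} {u : X ⟶ Y} (h : (tstar I).mem u) :
    ∃ (M : C) (v : X ⟶ M) (w : M ⟶ Y), (tstar I).mem v ∧ (tstar I).mem w ∧ u = v ≫ w :=
  mem_mul_iff.1 (tstar_mem_mul_self h)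

end CatIdeal

end Part3
section Part4

open CategoryTheory Ordinal

namespace CatIdeal

variable {C : Type u} [Category.{v} C] [Preadditive C]

lemma mem_tstar_of_system (I : CatIdeal C) {A B : C} (f : A ⟶ B)
    (X : ℚ → C) (g : ∀ p r : ℚ, X r ⟶ X p)
    (hI : ∀ p r : ℚ, 0 ≤ p → p < r → r ≤ 1 → I.mem (g p r))
    (hcomp : ∀ p r s : ℚ, 0 ≤ p → p < r → r < s → s ≤ 1 → g p s = g r s ≫ g p r)
    (h1 : X 1 = A) (h0 : X 0 = B)
    (hf : f = eqToHom h1.symm ≫ g 0 1 ≫ eqToHom h0) :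
    (tstar I).mem f := by
  classical
  have main : ∀ α : Ordinal.{v}, ∀ p r : ℚ, 0 ≤ p → p < r → r ≤ 1 →
      (tpow I α).mem (g p r) := by
    intro α
    induction α using Ordinal.induction with
    | h α IH =>
      intro p r hp hpr hr
      rcases eq_or_ne α 0 with rfl | h0'
      · rw [tpow_zero]; trivial
      by_cases hl : Order.IsSuccLimit α
      · rw [tpow_limit I hl]
        exact fun β => IH β.1 β.2 p r hp hpr hr
      · rw [tpow_succ I h0' hl]
        have hpredlt : Ordinal.pred α < α := Ordinal.pred_lt_iff_not_isSuccPrelimit.2 (fun hp => hl (Ordinal.isSuccLimit_iff.2 ⟨h0', hp⟩))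
        set m := (p + r)/2 with hm
        have hpm : p < m := by rw [hm]; linarith
        have hmr : m < r := by rw [hm]; linarith
        have hsp : g p r = g m r ≫ g p m := hcomp p m r hp hpm hmr hr
        rw [hsp]
        apply mul_mem_of
        · exact IH _ hpredlt m r (hp.trans hpm.le) hmr hr
        · by_cases hω : Ordinal.omega0 ≤ α
          · rw [if_pos hω]
            exact IH _ (limitPart_lt h0' hl) p m hp hpm (hmr.le.trans hr)
          · rw [if_neg hω]
            exact hI p m hp hpm (hmr.le.trans hr)
  intro α
  rw [hf]
  exact (tpow I α).comp_mem_right _ ((tpow I α).comp_mem_left _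
    (main α 0 1 le_rfl one_pos rfl.le))

end CatIdeal

end Part4
section Part5

open CategoryTheory

namespace Stmt4Aux

noncomputable def enumQ : ℕ → ℚ := (Denumerable.eqv ℚ).symm
noncomputable def idxQ : ℚ → ℕ := Denumerable.eqv ℚ

lemma enumQ_idxQ (q : ℚ) : enumQ (idxQ q) = q := (Denumerable.eqv ℚ).symm_apply_apply q

lemma enumQ_inj : Function.Injective enumQ := (Denumerable.eqv ℚ).symm.injective

noncomputable def FQ (n : ℕ) : Finset ℚ := {0, 1} ∪ (Finset.range n).image enumQ

lemma zero_mem_FQ (n : ℕ) : (0 : ℚ) ∈ FQ n := by simp [FQ]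

lemma one_mem_FQ (n : ℕ) : (1 : ℚ) ∈ FQ n := by simp [FQ]

lemma FQ_mono {n m : ℕ} (h : n ≤ m) : FQ n ⊆ FQ m := by
  apply Finset.union_subset_union (le_refl _)
  exact Finset.image_subset_image (Finset.range_subset_range.2 h)

lemma FQ_succ (n : ℕ) : FQ (n + 1) = insert (enumQ n) (FQ n) := by
  simp [FQ, Finset.range_add_one, Finset.union_insert]

lemma enumQ_mem_FQ_succ (n : ℕ) : enumQ n ∈ FQ (n + 1) := by
  rw [FQ_succ]; exact Finset.mem_insert_self _ _

lemma enumQ_not_mem_FQ {n : ℕ} (h0 : 0 < enumQ n) (h1 : enumQ n < 1) :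
    enumQ n ∉ FQ n := by
  intro h
  simp only [FQ, Finset.mem_union, Finset.mem_insert, Finset.mem_singleton,
    Finset.mem_image, Finset.mem_range] at h
  rcases h with (h | h) | ⟨i, hi, hie⟩
  · exact absurd h0 (by rw [h]; norm_num)
  · exact absurd h1 (by rw [h]; norm_num)
  · exact Nat.ne_of_lt hi (enumQ_inj hie)

lemma mem_FQ_succ_elim {n : ℕ} {q : ℚ} (h : q ∈ FQ (n + 1)) :
    q = enumQ n ∨ q ∈ FQ n := by
  rw [FQ_succ] at h; exact Finset.mem_insert.1 h

end Stmt4Aux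

end Part5
section Part5b

open CategoryTheory

set_option linter.unusedSectionVars false

namespace Stmt4Aux

variable {C : Type u} [Category.{v} C] [Preadditive C]

def SysP (T : CatIdeal C) {A B : C} (f : A ⟶ B) (n : ℕ)
    (X : ℚ → C) (g : ∀ p r : ℚ, X r ⟶ X p) : Prop :=
  (∀ p, g p p = 𝟙 (X p)) ∧
  (∀ p r : ℚ, p ∈ FQ n → r ∈ FQ n → 0 ≤ p → p < r → r ≤ 1 → T.mem (g p r)) ∧
  (∀ p r s : ℚ, p ∈ FQ n → r ∈ FQ n → s ∈ FQ n → 0 ≤ p → p ≤ r → r ≤ s → s ≤ 1 →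
    g p s = g r s ≫ g p r) ∧
  ∃ (h1 : X 1 = A) (h0 : X 0 = B), f = eqToHom h1.symm ≫ g 0 1 ≫ eqToHom h0

noncomputable def baseX (A B : C) : ℚ → C := fun p => if p = 1 then A else B

lemma baseX_one (A B : C) : baseX A B 1 = A := if_pos rfl

lemma baseX_ne (A B : C) {p : ℚ} (h : p ≠ 1) : baseX A B p = B := if_neg h

noncomputable def baseG (A B : C) (f : A ⟶ B) : ∀ p r : ℚ, baseX A B r ⟶ baseX A B p :=
  fun p r =>
    if h : p = r then eqToHom (by rw [h])
    else if h' : p = 0 ∧ r = 1 then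
      eqToHom (by rw [h'.2, baseX_one]) ≫ f ≫
        eqToHom (by rw [h'.1, baseX_ne A B (by norm_num)])
    else 0

lemma baseG_diag (A B : C) (f : A ⟶ B) (p : ℚ) : baseG A B f p p = 𝟙 _ := by
  rw [baseG, dif_pos rfl, eqToHom_refl]

lemma baseG_zero_one (A B : C) (f : A ⟶ B) :
    baseG A B f 0 1 = eqToHom (baseX_one A B) ≫ f ≫
      eqToHom (baseX_ne A B (p := 0) (by norm_num)).symm := by
  rw [baseG, dif_neg (by norm_num : (0 : ℚ) ≠ 1), dif_pos ⟨rfl, rfl⟩]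

lemma base_sysP (T : CatIdeal C) {A B : C} (f : A ⟶ B) (hf : T.mem f) :
    SysP T f 0 (baseX A B) (baseG A B f) := by
  refine ⟨baseG_diag A B f, ?_, ?_, ?_⟩
  · intro p r hp hr h0 hpr h1
    have hFQ : ∀ q : ℚ, q ∈ FQ 0 → q = 0 ∨ q = 1 := by
      intro q hq; simpa [FQ] using hq
    rcases hFQ p hp with rfl | rfl
    · rcases hFQ r hr with rfl | rfl
      · exact absurd hpr (lt_irrefl _)
      · rw [baseG_zero_one]
        exact T.comp_mem_right _ (T.comp_mem_left _ hf)
    · exact absurd (hpr.trans_le h1) (lt_irrefl _)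
  · intro p r s hp hr hs h0 hpr hrs h1
    have hFQ : ∀ q : ℚ, q ∈ FQ 0 → q = 0 ∨ q = 1 := by
      intro q hq; simpa [FQ] using hq
    rcases eq_or_lt_of_le hpr with rfl | hpr'
    · rw [baseG_diag]; try simp
    · rcases eq_or_lt_of_le hrs with rfl | hrs'
      · rw [baseG_diag]; try simp
      · exfalso
        rcases hFQ p hp with rfl | rfl <;> rcases hFQ r hr with rfl | rfl <;>
          rcases hFQ s hs with rfl | rfl <;> linarith
  · refine ⟨baseX_one A B, baseX_ne A B (by norm_num), ?_⟩
    rw [baseG_zero_one]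
    simp

noncomputable def stepG {X : ℚ → C} (g : ∀ p r : ℚ, X r ⟶ X p) (t a b : ℚ) {M : C}
    (v : X b ⟶ M) (w : M ⟶ X a) (X' : ℚ → C)
    (hXne : ∀ q, q ≠ t → X' q = X q) (hXt : X' t = M) :
    ∀ p r : ℚ, X' r ⟶ X' p := fun p r =>
  if hpr : p = r then eqToHom (by rw [hpr])
  else if hp : p = t then
    eqToHom (hXne r fun h => hpr (hp.trans h.symm)) ≫ g b r ≫ v ≫
      eqToHom (by rw [hp, hXt])
  else if hr : r = t then
    eqToHom (by rw [hr, hXt]) ≫ w ≫ g p a ≫ eqToHom (hXne p hp).symm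
  else eqToHom (hXne r hr) ≫ g p r ≫ eqToHom (hXne p hp).symm

variable {X : ℚ → C} (g : ∀ p r : ℚ, X r ⟶ X p) (t a b : ℚ) {M : C}
  (v : X b ⟶ M) (w : M ⟶ X a) (X' : ℚ → C)
  (hXne : ∀ q, q ≠ t → X' q = X q) (hXt : X' t = M)

lemma stepG_diag (p : ℚ) : stepG g t a b v w X' hXne hXt p p = 𝟙 _ := by
  rw [stepG, dif_pos rfl, eqToHom_refl]

lemma stepG_left {p r : ℚ} (hp : p = t) (hpr : p ≠ r) (e1 : X' r = X r) (e2 : M = X' p) :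
    stepG g t a b v w X' hXne hXt p r = eqToHom e1 ≫ g b r ≫ v ≫ eqToHom e2 := by
  rw [stepG, dif_neg hpr, dif_pos hp]

lemma stepG_right {p r : ℚ} (hr : r = t) (hpr : p ≠ r) (hp : p ≠ t)
    (e1 : X' r = M) (e2 : X p = X' p) :
    stepG g t a b v w X' hXne hXt p r = eqToHom e1 ≫ w ≫ g p a ≫ eqToHom e2 := by
  rw [stepG, dif_neg hpr, dif_neg hp, dif_pos hr]

lemma stepG_other {p r : ℚ} (hpr : p ≠ r) (hp : p ≠ t) (hr : r ≠ t)
    (e1 : X' r = X r) (e2 : X p = X' p) :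
    stepG g t a b v w X' hXne hXt p r = eqToHom e1 ≫ g p r ≫ eqToHom e2 := by
  rw [stepG, dif_neg hpr, dif_neg hp, dif_neg hr]

end Stmt4Aux

end Part5b
section Part5c

set_option linter.unusedSectionVars false

open CategoryTheory

namespace Stmt4Aux

variable {C : Type u} [Category.{v} C] [Preadditive C]

lemma step_ex (T : CatIdeal C) {A B : C} (f : A ⟶ B)
    (hsplit : ∀ {X Y : C} (u : X ⟶ Y), T.mem u →
      ∃ (M : C) (v : X ⟶ M) (w : M ⟶ Y), T.mem v ∧ T.mem w ∧ u = v ≫ w)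
    (n : ℕ) (X : ℚ → C) (g : ∀ p r : ℚ, X r ⟶ X p) (hS : SysP T f n X g) :
    ∃ (X' : ℚ → C) (g' : ∀ p r : ℚ, X' r ⟶ X' p), SysP T f (n+1) X' g' ∧
      ∃ hX : ∀ q : ℚ, (q = enumQ n → ¬(0 < enumQ n ∧ enumQ n < 1)) → X' q = X q,
        ∀ (p r : ℚ) (hp : p = enumQ n → ¬(0 < enumQ n ∧ enumQ n < 1))
          (hr : r = enumQ n → ¬(0 < enumQ n ∧ enumQ n < 1)),
          g' p r = eqToHom (hX r hr) ≫ g p r ≫ eqToHom (hX p hp).symm := by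
  classical
  obtain ⟨hdiag, hmem, hcomp, hf'⟩ := hS
  by_cases htin : 0 < enumQ n ∧ enumQ n < 1
  · set t := enumQ n with ht
    have htF : t ∉ FQ n := enumQ_not_mem_FQ htin.1 htin.2
    have hlo : (0 : ℚ) ∈ (FQ n).filter (· < t) :=
      Finset.mem_filter.2 ⟨zero_mem_FQ n, htin.1⟩
    have hhi : (1 : ℚ) ∈ (FQ n).filter (t < ·) :=
      Finset.mem_filter.2 ⟨one_mem_FQ n, htin.2⟩
    set a := ((FQ n).filter (· < t)).max' ⟨0, hlo⟩ with ha
    set b := ((FQ n).filter (t < ·)).min' ⟨1, hhi⟩ with hb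
    have hamem : a ∈ (FQ n).filter (· < t) :=
      Finset.max'_mem ((FQ n).filter (· < t)) ⟨0, hlo⟩
    obtain ⟨haF, hat⟩ := Finset.mem_filter.1 hamem
    have hamax : ∀ p ∈ FQ n, p < t → p ≤ a := fun p hp hpt =>
      Finset.le_max' ((FQ n).filter (· < t)) p (Finset.mem_filter.2 ⟨hp, hpt⟩)
    have hbmem : b ∈ (FQ n).filter (t < ·) :=
      Finset.min'_mem ((FQ n).filter (t < ·)) ⟨1, hhi⟩
    obtain ⟨hbF, htb⟩ := Finset.mem_filter.1 hbmem
    have hbmin : ∀ p ∈ FQ n, t < p → b ≤ p := fun p hp hpt =>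
      Finset.min'_le ((FQ n).filter (t < ·)) p (Finset.mem_filter.2 ⟨hp, hpt⟩)
    have ha0 : 0 ≤ a := hamax 0 (zero_mem_FQ n) htin.1
    have hb1 : b ≤ 1 := hbmin 1 (one_mem_FQ n) htin.2
    have ha1 : a ≤ 1 := (hat.trans htin.2).le
    have hb0 : 0 ≤ b := (htin.1.trans htb).le
    have hab : a < b := hat.trans htb
    obtain ⟨M, v, w, hv, hw, hvw⟩ := hsplit (g a b) (hmem a b haF hbF ha0 hab hb1)
    set X' : ℚ → C := Function.update X t M with hX'
    have hXne : ∀ q, q ≠ t → X' q = X q := fun q hq => Function.update_of_ne hq _ _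
    have hXt : X' t = M := Function.update_self _ _ _
    refine ⟨X', stepG g t a b v w X' hXne hXt,
      ⟨stepG_diag g t a b v w X' hXne hXt, ?_, ?_, ?_⟩,
      fun q hq => hXne q (fun h => (hq h) htin), ?_⟩
    · -- membership
      intro p r hp hr h0p hpr h1r
      have hpr' : p ≠ r := ne_of_lt hpr
      by_cases hpt : p = t
      · rw [stepG_left g t a b v w X' hXne hXt hpt hpr'
          (hXne r (fun h => hpr' (hpt.trans h.symm))) (by rw [hpt, hXt])]
        exact T.comp_mem_right _ (T.comp_mem_right _ (T.comp_mem_left _ hv))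
      · by_cases hrt : r = t
        · rw [stepG_right g t a b v w X' hXne hXt hrt hpr' hpt
            (by rw [hrt, hXt]) (hXne p hpt).symm]
          exact T.comp_mem_right _ (T.comp_mem_left _ hw)
        · have hpF : p ∈ FQ n := (mem_FQ_succ_elim hp).resolve_left hpt
          have hrF : r ∈ FQ n := (mem_FQ_succ_elim hr).resolve_left hrt
          rw [stepG_other g t a b v w X' hXne hXt hpr' hpt hrt
            (hXne r hrt) (hXne p hpt).symm]
          exact T.comp_mem_right _ (T.comp_mem_left _ (hmem p r hpF hrF h0p hpr h1r))
    · -- composition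
      intro p r s hpF1 hrF1 hsF1 h0p hpr hrs hs1
      rcases eq_or_lt_of_le hpr with rfl | hpr'
      · simp [stepG_diag]
      rcases eq_or_lt_of_le hrs with rfl | hrs'
      · simp [stepG_diag]
      have hps' : p ≠ s := ne_of_lt (hpr'.trans hrs')
      have hprn : p ≠ r := ne_of_lt hpr'
      have hrsn : r ≠ s := ne_of_lt hrs'
      by_cases hpt : p = t
      · -- p = t; r, s > t
        have hrt : r ≠ t := fun h => hprn (hpt.trans h.symm)
        have hst : s ≠ t := fun h => hps' (hpt.trans h.symm)
        have hrF : r ∈ FQ n := (mem_FQ_succ_elim hrF1).resolve_left hrt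
        have hsF : s ∈ FQ n := (mem_FQ_succ_elim hsF1).resolve_left hst
        have hbr : b ≤ r := hbmin r hrF (hpt ▸ hpr')
        rw [stepG_left g t a b v w X' hXne hXt hpt hps'
            (hXne s hst) (by rw [hpt, hXt]),
          stepG_other g t a b v w X' hXne hXt hrsn hrt hst
            (hXne s hst) (hXne r hrt).symm,
          stepG_left g t a b v w X' hXne hXt hpt hprn
            (hXne r hrt) (by rw [hpt, hXt]),
          hcomp b r s hbF hrF hsF hb0 hbr hrs hs1]
        simp
      · by_cases hrt : r = t
        · -- r = t; p ≤ a, b ≤ s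
          have hst : s ≠ t := fun h => hrsn (hrt.trans h.symm)
          have hpF : p ∈ FQ n := (mem_FQ_succ_elim hpF1).resolve_left hpt
          have hsF : s ∈ FQ n := (mem_FQ_succ_elim hsF1).resolve_left hst
          have hpa : p ≤ a := hamax p hpF (hrt ▸ hpr')
          have hbs : b ≤ s := hbmin s hsF (hrt ▸ hrs')
          have key : g p s = g b s ≫ (v ≫ (w ≫ g p a)) := by
            rw [hcomp p a s hpF haF hsF h0p hpa (hab.le.trans hbs) hs1,
              hcomp a b s haF hbF hsF ha0 hab.le hbs hs1, hvw]
            simp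
          rw [stepG_other g t a b v w X' hXne hXt hps' hpt hst
              (hXne s hst) (hXne p hpt).symm,
            stepG_left g t a b v w X' hXne hXt hrt hrsn
              (hXne s hst) (by rw [hrt, hXt]),
            stepG_right g t a b v w X' hXne hXt hrt hprn hpt
              (by rw [hrt, hXt]) (hXne p hpt).symm,
            key]
          simp
        · by_cases hst : s = t
          · -- s = t; p ≤ r ≤ a
            have hpF : p ∈ FQ n := (mem_FQ_succ_elim hpF1).resolve_left hpt
            have hrF : r ∈ FQ n := (mem_FQ_succ_elim hrF1).resolve_left hrt
            have hra : r ≤ a := hamax r hrF (hst ▸ hrs')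
            rw [stepG_right g t a b v w X' hXne hXt hst hps' hpt
                (by rw [hst, hXt]) (hXne p hpt).symm,
              stepG_right g t a b v w X' hXne hXt hst hrsn hrt
                (by rw [hst, hXt]) (hXne r hrt).symm,
              stepG_other g t a b v w X' hXne hXt hprn hpt hrt
                (hXne r hrt) (hXne p hpt).symm,
              hcomp p r a hpF hrF haF h0p hpr hra ha1]
            simp
          · -- none equals t
            have hpF : p ∈ FQ n := (mem_FQ_succ_elim hpF1).resolve_left hpt
            have hrF : r ∈ FQ n := (mem_FQ_succ_elim hrF1).resolve_left hrt
            have hsF : s ∈ FQ n := (mem_FQ_succ_elim hsF1).resolve_left hst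
            rw [stepG_other g t a b v w X' hXne hXt hps' hpt hst
                (hXne s hst) (hXne p hpt).symm,
              stepG_other g t a b v w X' hXne hXt hrsn hrt hst
                (hXne s hst) (hXne r hrt).symm,
              stepG_other g t a b v w X' hXne hXt hprn hpt hrt
                (hXne r hrt) (hXne p hpt).symm,
              hcomp p r s hpF hrF hsF h0p hpr hrs hs1]
            simp
    · -- f-condition
      obtain ⟨h1, h0, hfe⟩ := hf'
      have h1t : (1 : ℚ) ≠ t := ne_of_gt htin.2
      have h0t : (0 : ℚ) ≠ t := ne_of_lt htin.1
      refine ⟨(hXne 1 h1t).trans h1, (hXne 0 h0t).trans h0, ?_⟩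
      rw [stepG_other g t a b v w X' hXne hXt (by norm_num) h0t h1t
        (hXne 1 h1t) (hXne 0 h0t).symm, hfe]
      simp
    · -- coherence
      intro p r hp hr
      have hpt : p ≠ t := fun h => (hp h) htin
      have hrt : r ≠ t := fun h => (hr h) htin
      by_cases hpr : p = r
      · subst hpr
        rw [stepG_diag, hdiag]
        simp
      · rw [stepG_other g t a b v w X' hXne hXt hpr hpt hrt
          (hXne r hrt) (hXne p hpt).symm]
  · -- no-change branch
    have hred : ∀ q : ℚ, q ∈ FQ (n+1) → 0 ≤ q → q ≤ 1 → q ∈ FQ n := by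
      intro q hq hq0 hq1
      rcases mem_FQ_succ_elim hq with hq' | hq'
      · rcases not_and_or.1 htin with h | h
        · have hq00 : q = 0 := le_antisymm (by rw [hq']; exact not_lt.1 h) hq0
          rw [hq00]; exact zero_mem_FQ n
        · have hq11 : q = 1 := le_antisymm hq1 (by rw [hq']; exact not_lt.1 h)
          rw [hq11]; exact one_mem_FQ n
      · exact hq'
    refine ⟨X, g, ⟨hdiag, ?_, ?_, hf'⟩, fun q _ => rfl, ?_⟩
    · intro p r hp hr h0p hpr h1r
      exact hmem p r (hred p hp h0p (hpr.le.trans h1r)) (hred r hr (h0p.trans hpr.le) h1r)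
        h0p hpr h1r
    · intro p r s hp hr hs h0p hpr hrs hs1
      exact hcomp p r s (hred p hp h0p ((hpr.trans hrs).trans hs1))
        (hred r hr (h0p.trans hpr) (hrs.trans hs1))
        (hred s hs ((h0p.trans hpr).trans hrs) hs1) h0p hpr hrs hs1
    · intro p r hp hr
      simp

end Stmt4Aux

end Part5c
section Part5d

set_option linter.unusedSectionVars false

open CategoryTheory

namespace Stmt4Aux

variable {C : Type u} [Category.{v} C] [Preadditive C]
variable (T : CatIdeal C) {A B : C} (f : A ⟶ B)

noncomputable def stepChoice
    (hsplit : ∀ {X Y : C} (u : X ⟶ Y), T.mem u →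
      ∃ (M : C) (v : X ⟶ M) (w : M ⟶ Y), T.mem v ∧ T.mem w ∧ u = v ≫ w)
    (n : ℕ) (prev : Σ' (X : ℚ → C) (g : ∀ p r : ℚ, X r ⟶ X p), SysP T f n X g) :
    Σ' (X' : ℚ → C) (g' : ∀ p r : ℚ, X' r ⟶ X' p),
      SysP T f (n+1) X' g' ∧
      ∃ hX : ∀ q : ℚ, (q = enumQ n → ¬(0 < enumQ n ∧ enumQ n < 1)) → X' q = prev.1 q,
        ∀ (p r : ℚ) (hp : p = enumQ n → ¬(0 < enumQ n ∧ enumQ n < 1))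
          (hr : r = enumQ n → ¬(0 < enumQ n ∧ enumQ n < 1)),
          g' p r = eqToHom (hX r hr) ≫ prev.2.1 p r ≫ eqToHom (hX p hp).symm :=
  Classical.choice (by
    obtain ⟨X, g, h⟩ := prev
    obtain ⟨X', g', h', hco⟩ := step_ex T f hsplit n X g h
    exact ⟨⟨X', g', h', hco⟩⟩)

noncomputable def seqSys
    (hsplit : ∀ {X Y : C} (u : X ⟶ Y), T.mem u →
      ∃ (M : C) (v : X ⟶ M) (w : M ⟶ Y), T.mem v ∧ T.mem w ∧ u = v ≫ w)
    (hf : T.mem f) :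
    ∀ n : ℕ, Σ' (X : ℚ → C) (g : ∀ p r : ℚ, X r ⟶ X p), SysP T f n X g
  | 0 => ⟨baseX A B, baseG A B f, base_sysP T f hf⟩
  | n+1 => ⟨(stepChoice T f hsplit n (seqSys hsplit hf n)).1,
           (stepChoice T f hsplit n (seqSys hsplit hf n)).2.1,
           (stepChoice T f hsplit n (seqSys hsplit hf n)).2.2.1⟩

variable (hsplit : ∀ {X Y : C} (u : X ⟶ Y), T.mem u →
      ∃ (M : C) (v : X ⟶ M) (w : M ⟶ Y), T.mem v ∧ T.mem w ∧ u = v ≫ w)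
  (hf : T.mem f)

lemma seqSys_succ_co (n : ℕ) :
    ∃ hX : ∀ q : ℚ, (q = enumQ n → ¬(0 < enumQ n ∧ enumQ n < 1)) →
        (seqSys T f hsplit hf (n+1)).1 q = (seqSys T f hsplit hf n).1 q,
      ∀ (p r : ℚ) (hp : p = enumQ n → ¬(0 < enumQ n ∧ enumQ n < 1))
        (hr : r = enumQ n → ¬(0 < enumQ n ∧ enumQ n < 1)),
        (seqSys T f hsplit hf (n+1)).2.1 p r =
          eqToHom (hX r hr) ≫ (seqSys T f hsplit hf n).2.1 p r ≫ eqToHom (hX p hp).symm :=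
  (stepChoice T f hsplit n (seqSys T f hsplit hf n)).2.2.2

lemma OK_of_memFQ {n : ℕ} {q : ℚ} (h : q ∈ FQ n) :
    q = enumQ n → ¬(0 < enumQ n ∧ enumQ n < 1) :=
  fun he hin => enumQ_not_mem_FQ hin.1 hin.2 (he ▸ h)

lemma stabX {q : ℚ} {n m : ℕ} (hnm : n ≤ m) (hq : q ∈ FQ n) :
    (seqSys T f hsplit hf m).1 q = (seqSys T f hsplit hf n).1 q := by
  induction m, hnm using Nat.le_induction with
  | base => rfl
  | succ m hm ih =>
    obtain ⟨hX, _⟩ := seqSys_succ_co T f hsplit hf m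
    exact (hX q (OK_of_memFQ (FQ_mono hm hq))).trans ih

lemma stabG {p r : ℚ} {n m : ℕ} (hnm : n ≤ m) (hp : p ∈ FQ n) (hr : r ∈ FQ n) :
    (seqSys T f hsplit hf m).2.1 p r =
      eqToHom (stabX T f hsplit hf hnm hr) ≫ (seqSys T f hsplit hf n).2.1 p r ≫
        eqToHom (stabX T f hsplit hf hnm hp).symm := by
  induction m, hnm using Nat.le_induction with
  | base => simp
  | succ m hm ih =>
    obtain ⟨hX, hg⟩ := seqSys_succ_co T f hsplit hf m
    rw [hg p r (OK_of_memFQ (FQ_mono hm hp)) (OK_of_memFQ (FQ_mono hm hr)), ih]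
    simp

lemma stabG' {p r : ℚ} {n m : ℕ} (hnm : n ≤ m) (hp : p ∈ FQ n) (hr : r ∈ FQ n) :
    (seqSys T f hsplit hf n).2.1 p r =
      eqToHom (stabX T f hsplit hf hnm hr).symm ≫ (seqSys T f hsplit hf m).2.1 p r ≫
        eqToHom (stabX T f hsplit hf hnm hp) := by
  rw [stabG T f hsplit hf hnm hp hr]
  simp

noncomputable def NQ (q : ℚ) : ℕ := if 0 < q ∧ q < 1 then idxQ q + 1 else 0

lemma mem_FQ_NQ {q : ℚ} (h0 : 0 ≤ q) (h1 : q ≤ 1) : q ∈ FQ (NQ q) := by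
  by_cases h : 0 < q ∧ q < 1
  · rw [NQ, if_pos h]
    have : q = enumQ (idxQ q) := (enumQ_idxQ q).symm
    rw [FQ]
    apply Finset.mem_union_right
    exact Finset.mem_image.2 ⟨idxQ q, Finset.mem_range.2 (Nat.lt_succ_self _), enumQ_idxQ q⟩
  · rw [NQ, if_neg h]
    rcases not_and_or.1 h with h' | h'
    · have hq : q = 0 := le_antisymm (not_lt.1 h') h0
      rw [hq]; exact zero_mem_FQ 0
    · have hq : q = 1 := le_antisymm h1 (not_lt.1 h')
      rw [hq]; exact one_mem_FQ 0

include hsplit hf in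
lemma forward_sys :
    ∃ (X : ℚ → C) (g : ∀ p r : ℚ, X r ⟶ X p),
      (∀ p r : ℚ, 0 ≤ p → p < r → r ≤ 1 → T.mem (g p r)) ∧
      (∀ p r s : ℚ, 0 ≤ p → p < r → r < s → s ≤ 1 → g p s = g r s ≫ g p r) ∧
      ∃ (h1 : X 1 = A) (h0 : X 0 = B), f = eqToHom h1.symm ≫ g 0 1 ≫ eqToHom h0 := by
  classical
  set S := seqSys T f hsplit hf with hS
  set XX : ℚ → C := fun q => (S (NQ q)).1 q with hXX
  have key : ∀ (L : ℕ) (q : ℚ) (h0 : 0 ≤ q) (h1 : q ≤ 1), NQ q ≤ L → (S L).1 q = XX q :=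
    fun L q h0 h1 hL => stabX T f hsplit hf hL (mem_FQ_NQ h0 h1)
  refine ⟨XX, fun p r =>
    if h : (0 ≤ p ∧ p ≤ 1) ∧ (0 ≤ r ∧ r ≤ 1) then
      eqToHom (key (max (NQ p) (NQ r)) r h.2.1 h.2.2 (le_max_right _ _)).symm ≫
        (S (max (NQ p) (NQ r))).2.1 p r ≫
        eqToHom (key (max (NQ p) (NQ r)) p h.1.1 h.1.2 (le_max_left _ _))
    else 0, ?_, ?_, ?_⟩
  · -- membership
    intro p r h0p hpr h1r
    have hb : (0 ≤ p ∧ p ≤ 1) ∧ (0 ≤ r ∧ r ≤ 1) :=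
      ⟨⟨h0p, hpr.le.trans h1r⟩, ⟨h0p.trans hpr.le, h1r⟩⟩
    simp only [dif_pos hb]
    have hpK : p ∈ FQ (max (NQ p) (NQ r)) :=
      FQ_mono (le_max_left _ _) (mem_FQ_NQ hb.1.1 hb.1.2)
    have hrK : r ∈ FQ (max (NQ p) (NQ r)) :=
      FQ_mono (le_max_right _ _) (mem_FQ_NQ hb.2.1 hb.2.2)
    exact T.comp_mem_right _ (T.comp_mem_left _
      ((S (max (NQ p) (NQ r))).2.2.2.1 p r hpK hrK h0p hpr h1r))
  · -- composition
    intro p r s h0p hpr hrs hs1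
    have hbp : 0 ≤ p ∧ p ≤ 1 := ⟨h0p, ((hpr.trans hrs).le.trans hs1)⟩
    have hbr : 0 ≤ r ∧ r ≤ 1 := ⟨h0p.trans hpr.le, hrs.le.trans hs1⟩
    have hbs : 0 ≤ s ∧ s ≤ 1 := ⟨(h0p.trans hpr.le).trans hrs.le, hs1⟩
    set L := max (NQ p) (max (NQ r) (NQ s)) with hL
    have hpL : p ∈ FQ L := FQ_mono (le_max_left _ _) (mem_FQ_NQ hbp.1 hbp.2)
    have hrL : r ∈ FQ L := FQ_mono ((le_max_left _ _).trans (le_max_right _ _))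
      (mem_FQ_NQ hbr.1 hbr.2)
    have hsL : s ∈ FQ L := FQ_mono ((le_max_right _ _).trans (le_max_right _ _))
      (mem_FQ_NQ hbs.1 hbs.2)
    simp only [dif_pos (⟨hbp, hbs⟩ : (0 ≤ p ∧ p ≤ 1) ∧ (0 ≤ s ∧ s ≤ 1)),
      dif_pos (⟨hbr, hbs⟩ : (0 ≤ r ∧ r ≤ 1) ∧ (0 ≤ s ∧ s ≤ 1)),
      dif_pos (⟨hbp, hbr⟩ : (0 ≤ p ∧ p ≤ 1) ∧ (0 ≤ r ∧ r ≤ 1))]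
    rw [stabG' T f hsplit hf (max_le (le_max_left _ _)
        ((le_max_right _ _).trans (le_max_right _ _)))
        (FQ_mono (le_max_left _ _) (mem_FQ_NQ hbp.1 hbp.2))
        (FQ_mono (le_max_right _ _) (mem_FQ_NQ hbs.1 hbs.2)) (m := L),
      stabG' T f hsplit hf (max_le ((le_max_left _ _).trans (le_max_right _ _))
        ((le_max_right _ _).trans (le_max_right _ _)))
        (FQ_mono (le_max_left _ _) (mem_FQ_NQ hbr.1 hbr.2))
        (FQ_mono (le_max_right _ _) (mem_FQ_NQ hbs.1 hbs.2)) (m := L),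
      stabG' T f hsplit hf (max_le (le_max_left _ _)
        ((le_max_left _ _).trans (le_max_right _ _)))
        (FQ_mono (le_max_left _ _) (mem_FQ_NQ hbp.1 hbp.2))
        (FQ_mono (le_max_right _ _) (mem_FQ_NQ hbr.1 hbr.2)) (m := L)]
    rw [(S L).2.2.2.2.1 p r s hpL hrL hsL h0p hpr.le hrs.le hs1]
    simp
    rfl
  · -- f-condition
    obtain ⟨h1N, h0N, _⟩ := (S (NQ 1)).2.2.2.2.2
    obtain ⟨h1N', h0N', _⟩ := (S (NQ 0)).2.2.2.2.2
    have hXX1 : XX 1 = A := h1N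
    have hXX0 : XX 0 = B := h0N'
    refine ⟨hXX1, hXX0, ?_⟩
    have hb : ((0:ℚ) ≤ 0 ∧ (0:ℚ) ≤ 1) ∧ ((0:ℚ) ≤ 1 ∧ (1:ℚ) ≤ 1) := by norm_num
    simp only [dif_pos hb]
    obtain ⟨h1K, h0K, hfK⟩ := (S (max (NQ 0) (NQ 1))).2.2.2.2.2
    conv_lhs => rw [hfK]
    simp

end Stmt4Aux

end Part5d

open CategoryTheory in
/-- A morphism lies in the transfinite radical iff it extends to an inverse
system of radical morphisms indexed by the rationals in `[0,1]`. -/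
theorem stmt4 {C : Type u} [CategoryTheory.Category.{v} C] [CategoryTheory.Preadditive C] [CategoryTheory.Limits.HasFiniteBiproducts C] [CategoryTheory.EssentiallySmall.{v} C] (hKS : IsKrullSchmidt C) {A B : C} (f : A ⟶ B) :
    (catTransRadical C).mem f ↔
      ∃ (X : ℚ → C) (g : ∀ p r : ℚ, X r ⟶ X p),
        (∀ p r : ℚ, 0 ≤ p → p < r → r ≤ 1 → (catRadical C).mem (g p r)) ∧
        (∀ p r s : ℚ, 0 ≤ p → p < r → r < s → s ≤ 1 → g p s = g r s ≫ g p r) ∧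
        ∃ (h1 : X 1 = A) (h0 : X 0 = B),
          f = CategoryTheory.eqToHom h1.symm ≫ g 0 1 ≫ CategoryTheory.eqToHom h0 := by
  constructor
  · intro h
    obtain ⟨X, g, hmem, hcomp, h1, h0, hfe⟩ :=
      Stmt4Aux.forward_sys (CatIdeal.tstar (catRadical C)) f
        (fun u hu => CatIdeal.tstar_split hu) h
    exact ⟨X, g, fun p r h0p hpr h1r =>
      CatIdeal.tstar_le_self _ (hmem p r h0p hpr h1r), hcomp, h1, h0, hfe⟩
  · rintro ⟨X, g, hmem, hcomp, h1, h0, hfe⟩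
    exact CatIdeal.mem_tstar_of_system (catRadical C) f X g hmem hcomp h1 h0 hfe
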